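/- Let σ be a unit vector in R^3, ε ∈ {+1,-1}, and let y be a nonzero vector in R^3 with y·σ ≠ -ε|y|. Then, setting ν = R_σ^ε(y) = y/2 + ε(|y|/2)σ, one has ν ≠ 0, |ν·σ| = ε(ν·σ), |y| = |ν|/|ν̂·σ|, and ŷ·σ = ε(2|ν̂·σ|² - 1), where ν̂ = ν/|ν| and ŷ = y/|y|. -/

import Mathlib

open RealInnerProductSpace

noncomputable section

theorem bobylev_forward_identities
    (σ y : EuclideanSpace ℝ (Fin 3)) (hσ : ‖σ‖ = 1)
    (ε : ℝ) (hε : ε = 1 ∨ ε = -1)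
    (hy : y ≠ 0) (hyσ : ⟪y, σ⟫ ≠ -ε * ‖y‖) :
    (1/2 : ℝ) • y + (ε * (‖y‖/2)) • σ ≠ 0 ∧
    |⟪(1/2 : ℝ) • y + (ε * (‖y‖/2)) • σ, σ⟫|
      = ε * ⟪(1/2 : ℝ) • y + (ε * (‖y‖/2)) • σ, σ⟫ ∧
    ‖y‖ = ‖(1/2 : ℝ) • y + (ε * (‖y‖/2)) • σ‖
      / |⟪‖(1/2 : ℝ) • y + (ε * (‖y‖/2)) • σ‖⁻¹ • ((1/2 : ℝ) • y + (ε * (‖y‖/2)) • σ), σ⟫| ∧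
    ⟪‖y‖⁻¹ • y, σ⟫
      = ε * (2 * |⟪‖(1/2 : ℝ) • y + (ε * (‖y‖/2)) • σ‖⁻¹ • ((1/2 : ℝ) • y + (ε * (‖y‖/2)) • σ), σ⟫|^2 - 1) := by
  set ν : EuclideanSpace ℝ (Fin 3) := (1/2 : ℝ) • y + (ε * (‖y‖/2)) • σ with hνdef
  have hε2 : ε ^ 2 = 1 := by rcases hε with h | h <;> simp [h]
  have hn : 0 < ‖y‖ := norm_pos_iff.mpr hy
  have hσσ : ⟪σ, σ⟫ = 1 := by
    rw [real_inner_self_eq_norm_sq, hσ]; norm_num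
  have hνσ : ⟪ν, σ⟫ = (⟪y, σ⟫ + ε * ‖y‖) / 2 := by
    simp only [hνdef, inner_add_left, real_inner_smul_left, hσσ]; ring
  have habs : |⟪y, σ⟫| ≤ ‖y‖ := by
    have := abs_real_inner_le_norm y σ
    simpa [hσ] using this
  have h1 := (abs_le.mp habs).1
  have h2 := (abs_le.mp habs).2
  have hpos : 0 < ε * ⟪ν, σ⟫ := by
    rw [hνσ]
    rcases hε with h | h <;> subst h
    · have hne : -‖y‖ ≠ ⟪y, σ⟫ := by
        intro h; apply hyσ; rw [← h]; ring
      have := lt_of_le_of_ne h1 (Ne.symm (by simpa using hne)).symm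
      nlinarith
    · have hne : ⟪y, σ⟫ ≠ ‖y‖ := by
        intro h; apply hyσ; rw [h]; ring
      have := lt_of_le_of_ne h2 hne
      nlinarith
  have hνσne : ⟪ν, σ⟫ ≠ 0 := by
    intro h; rw [h, mul_zero] at hpos; exact lt_irrefl 0 hpos
  have hνne : ν ≠ 0 := by
    intro h; apply hνσne; rw [h]; simp
  have hνn : 0 < ‖ν‖ := norm_pos_iff.mpr hνne
  have habsν : |⟪ν, σ⟫| = ε * ⟪ν, σ⟫ := by
    rcases hε with h | h <;> subst h
    · rw [one_mul] at hpos ⊢; exact abs_of_pos hpos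
    · have : ⟪ν, σ⟫ < 0 := by nlinarith
      rw [abs_of_neg this]; ring
  have hν2 : ‖ν‖ ^ 2 = ‖y‖ * (ε * ⟪ν, σ⟫) := by
    have : ‖ν‖ ^ 2 = ⟪ν, ν⟫ := (real_inner_self_eq_norm_sq ν).symm
    rw [this]
    simp only [hνdef, inner_add_left, inner_add_right, real_inner_smul_left,
      real_inner_smul_right, hσσ, real_inner_comm σ y]
    rw [real_inner_self_eq_norm_sq y]
    linear_combination (-(‖y‖ ^ 2 / 4)) * hε2
  have hhat : ⟪‖ν‖⁻¹ • ν, σ⟫ = ‖ν‖⁻¹ * ⟪ν, σ⟫ := real_inner_smul_left ν σ ‖ν‖⁻¹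
  have habshat : |⟪‖ν‖⁻¹ • ν, σ⟫| = ‖ν‖⁻¹ * (ε * ⟪ν, σ⟫) := by
    rw [hhat, abs_mul, abs_of_pos (inv_pos.mpr hνn), habsν]
  refine ⟨hνne, habsν, ?_, ?_⟩
  · rw [habshat, eq_div_iff (ne_of_gt (mul_pos (inv_pos.mpr hνn) hpos))]
    have : ‖y‖ * (‖ν‖⁻¹ * (ε * ⟪ν, σ⟫)) = ‖ν‖⁻¹ * ‖ν‖ ^ 2 := by
      linear_combination (-(‖ν‖⁻¹)) * hν2
    rw [this, sq, ← mul_assoc, inv_mul_cancel₀ (ne_of_gt hνn), one_mul]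
  · rw [habshat, real_inner_smul_left]
    have h2t : 2 * ⟪ν, σ⟫ = ⟪y, σ⟫ + ε * ‖y‖ := by rw [hνσ]; ring
    set t := ⟪ν, σ⟫ with htd
    set s := ⟪y, σ⟫ with hsd
    set m := ‖ν‖ with hmd
    set n := ‖y‖ with hnd
    have hmne : m ≠ 0 := ne_of_gt hνn
    have hnne : n ≠ 0 := ne_of_gt hn
    have key : (m⁻¹ * (ε * t)) ^ 2 = ε * t / n := by
      field_simp
      linear_combination (-ε) * hν2
    rw [key]
    field_simp
    linear_combination (-2 * t) * hε2 - h2t
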